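/- Let (z_k)_{k≥1} be positive reals with ∑_{k=1}^∞ 1/z_k² < ∞. Then for every t ∈ ℝ, ∏_{k=1}^∞ (1 + t²/z_k²)^{-1} = exp( − ∫_{ℝ∖{0}} (1 − cos(tx)) · ( ∑_{k=1}^∞ e^{-z_k |x|} ) / |x| dx ), where the integral on the right is finite. -/

import Mathlib

open MeasureTheory Real Set Filter Topology

lemma laplace_sin {z : ℝ} (hz : 0 < z) (s : ℝ) :
    ∫ x in Ioi (0:ℝ), Real.exp (-z * x) * Real.sin (s * x) = s / (z^2 + s^2) := by
  have hden : (0:ℝ) < z^2 + s^2 := by positivity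
  set G : ℝ → ℝ := fun x => -(Real.exp (-z*x) * (z * Real.sin (s*x) + s * Real.cos (s*x))) / (z^2+s^2) with hG
  have hderiv : ∀ x ∈ Ici (0:ℝ), HasDerivAt G (Real.exp (-z*x) * Real.sin (s*x)) x := by
    intro x _
    have h1 : HasDerivAt (fun x => Real.exp (-z*x)) (-z * Real.exp (-z*x)) x := by
      simpa [mul_comm] using ((hasDerivAt_id x).const_mul (-z)).exp
    have h2 : HasDerivAt (fun x => z * Real.sin (s*x) + s * Real.cos (s*x))
        (z * (Real.cos (s*x) * s) + s * (-Real.sin (s*x) * s)) x := by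
      have hs : HasDerivAt (fun x => s * x) s x := by simpa using (hasDerivAt_id x).const_mul s
      exact ((hs.sin.const_mul z)).add ((hs.cos.const_mul s))
    have := ((h1.mul h2).neg).div_const (z^2+s^2)
    refine this.congr_deriv ?_
    rw [div_eq_iff hden.ne']
    ring
  have hint : IntegrableOn (fun x => Real.exp (-z*x) * Real.sin (s*x)) (Ioi (0:ℝ)) := by
    refine (exp_neg_integrableOn_Ioi 0 hz).mono' ?_ ?_
    · exact (Real.continuous_exp.comp (continuous_const.mul continuous_id)).aestronglyMeasurable.mul
        (Real.continuous_sin.comp (continuous_const.mul continuous_id)).aestronglyMeasurable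
    · filter_upwards with x
      rw [norm_mul]
      calc ‖Real.exp (-z*x)‖ * ‖Real.sin (s*x)‖ ≤ ‖Real.exp (-z*x)‖ * 1 := by
            exact mul_le_mul_of_nonneg_left (abs_le.mpr ⟨neg_one_le_sin _, Real.sin_le_one _⟩) (norm_nonneg _)
        _ = Real.exp (-z*x) := by rw [mul_one, Real.norm_eq_abs, abs_of_pos (Real.exp_pos _)]
  have htend : Tendsto G atTop (𝓝 0) := by
    have hb : Tendsto (fun x => Real.exp (-z*x)) atTop (𝓝 0) := by
      have h1 : Tendsto (fun x:ℝ => z * x) atTop atTop := tendsto_id.const_mul_atTop hz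
      have := Real.tendsto_exp_neg_atTop_nhds_zero.comp h1
      simpa only [Function.comp_def, neg_mul] using this
    have : Tendsto (fun x => -(Real.exp (-z*x) * (z * Real.sin (s*x) + s * Real.cos (s*x)))) atTop (𝓝 0) := by
      rw [show (0:ℝ) = -0 by ring]
      apply Tendsto.neg
      have : Tendsto (fun x => Real.exp (-z*x) * (|z| + |s|)) atTop (𝓝 0) := by
        simpa using hb.mul_const (|z| + |s|)
      refine squeeze_zero_norm (fun x => ?_) this
      rw [norm_mul, Real.norm_eq_abs, abs_of_pos (Real.exp_pos _)]
      refine mul_le_mul_of_nonneg_left ?_ (Real.exp_pos _).le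
      calc ‖z * Real.sin (s*x) + s * Real.cos (s*x)‖ ≤ |z * Real.sin (s*x)| + |s * Real.cos (s*x)| := abs_add_le _ _
        _ ≤ |z| * 1 + |s| * 1 := by
            rw [abs_mul, abs_mul]
            gcongr
            · exact abs_sin_le_one _
            · exact abs_cos_le_one _
        _ = |z| + |s| := by ring
    simpa [hG] using this.div_const (z^2+s^2)
  have h0 := integral_Ioi_of_hasDerivAt_of_tendsto' hderiv hint htend
  rw [h0, hG]
  simp
  field_simp


lemma one_sub_cos_le_abs (v : ℝ) : 1 - Real.cos v ≤ |v| := by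
  have h1 : Real.sin (v/2)^2 = 1/2 - Real.cos v / 2 := by
    have := Real.sin_sq_eq_half_sub (v/2)
    rwa [show 2*(v/2) = v by ring] at this
  have h2 : |Real.sin (v/2)| ≤ |v|/2 := by
    have := Real.abs_sin_le_abs (x := v/2)
    rwa [abs_div, abs_two] at this
  have h3 : Real.sin (v/2)^2 ≤ |Real.sin (v/2)| := by
    have := Real.abs_sin_le_one (v/2)
    nlinarith [abs_nonneg (Real.sin (v/2)), sq_abs (Real.sin (v/2))]
  nlinarith


lemma halfLog {z : ℝ} (hz : 0 < z) (t : ℝ) :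
    ∫ x in Ioi (0:ℝ), (1 - Real.cos (t*x)) * Real.exp (-z*x) / x
      = Real.log (1 + t^2/z^2) / 2 := by
  set μ := (volume : Measure ℝ).restrict (Ioi 0) with hμ
  set F : ℝ → ℝ → ℝ := fun u x => (1 - Real.cos (u*x)) * Real.exp (-z*x) / x with hF
  set F' : ℝ → ℝ → ℝ := fun u x => Real.sin (u*x) * Real.exp (-z*x) with hF'
  have hmeasF : ∀ u : ℝ, AEStronglyMeasurable (F u) μ := by
    intro u
    apply Measurable.aestronglyMeasurable
    exact ((measurable_const.sub ((measurable_const_mul u).cos)).mul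
      ((measurable_id.const_mul (-z)).exp)).div measurable_id
  have hintF : ∀ u : ℝ, Integrable (F u) μ := by
    intro u
    refine ((exp_neg_integrableOn_Ioi 0 hz).const_mul |u|).mono' (hmeasF u) ?_
    rw [ae_restrict_iff' measurableSet_Ioi]
    filter_upwards with x hx
    rw [hF]
    simp only
    rw [Real.norm_eq_abs, abs_div, abs_mul, abs_of_pos (mem_Ioi.mp hx), abs_of_pos (Real.exp_pos _),
      div_le_iff₀ (mem_Ioi.mp hx)]
    have h1 : |1 - Real.cos (u*x)| ≤ |u| * x := by
      rw [abs_of_nonneg (by nlinarith [Real.cos_le_one (u*x)])]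
      calc 1 - Real.cos (u*x) ≤ |u*x| := one_sub_cos_le_abs _
        _ = |u| * x := by rw [abs_mul, abs_of_pos (mem_Ioi.mp hx)]
    calc |1 - Real.cos (u*x)| * Real.exp (-z*x) ≤ (|u| * x) * Real.exp (-z*x) :=
          mul_le_mul_of_nonneg_right h1 (Real.exp_pos _).le
      _ = |u| * Real.exp (-z*x) * x := by ring
  have hmeasF' : ∀ u : ℝ, AEStronglyMeasurable (F' u) μ := by
    intro u
    apply Measurable.aestronglyMeasurable
    exact ((measurable_const_mul u).sin).mul ((measurable_id.const_mul (-z)).exp)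
  have key : ∀ u : ℝ, HasDerivAt (fun v => ∫ x, F v x ∂μ) (u / (z^2 + u^2)) u := by
    intro u
    have h := hasDerivAt_integral_of_dominated_loc_of_deriv_le (F := F) (F' := F')
      (bound := fun x => Real.exp (-z*x)) (μ := μ) (x₀ := u) Filter.univ_mem
      (Eventually.of_forall hmeasF) (hintF u) (hmeasF' u)
      ?_ (exp_neg_integrableOn_Ioi 0 hz) ?_
    · have : (∫ x, F' u x ∂μ) = u / (z^2 + u^2) := by
        rw [hμ, ← laplace_sin hz u]
        apply setIntegral_congr_fun measurableSet_Ioi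
        intro x _
        rw [hF']
        ring
      have h2 := h.2
      rwa [this] at h2
    · rw [hμ, ae_restrict_iff' measurableSet_Ioi]
      filter_upwards with x hx v _
      rw [hF']
      simp only
      rw [Real.norm_eq_abs, abs_mul, abs_of_pos (Real.exp_pos _)]
      exact mul_le_of_le_one_left (Real.exp_pos _).le (Real.abs_sin_le_one _)
    · rw [hμ, ae_restrict_iff' measurableSet_Ioi]
      filter_upwards with x hx v _
      have h1 : HasDerivAt (fun v => 1 - Real.cos (v*x)) (Real.sin (v*x) * x) v := by
        have hs : HasDerivAt (fun v => v * x) x v := hasDerivAt_mul_const x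
        simpa using (hs.cos.const_sub 1)
      have hx0 : x ≠ 0 := ne_of_gt hx
      have := (h1.mul_const (Real.exp (-z*x))).div_const x
      refine this.congr_deriv ?_
      rw [hF']
      field_simp
  have keyG : ∀ u : ℝ, HasDerivAt (fun v => Real.log (1 + v^2/z^2) / 2) (u / (z^2 + u^2)) u := by
    intro u
    have hpos : (0:ℝ) < 1 + u^2/z^2 := by positivity
    have h1 : HasDerivAt (fun v : ℝ => 1 + v^2/z^2) (2*u/z^2) u := by
      have := ((hasDerivAt_pow 2 u).div_const (z^2)).const_add 1
      simpa [mul_comm, mul_div_assoc] using this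
    have h2 := (h1.log hpos.ne').div_const 2
    refine h2.congr_deriv ?_
    have hz0 : z ≠ 0 := hz.ne'
    field_simp
  have hsub : ∀ u : ℝ, (∫ x, F u x ∂μ) - Real.log (1 + u^2/z^2) / 2
      = (∫ x, F 0 x ∂μ) - Real.log (1 + 0^2/z^2) / 2 := fun u =>
    is_const_of_deriv_eq_zero
      (f := fun v => (∫ x, F v x ∂μ) - Real.log (1 + v^2/z^2) / 2)
      (fun v => ((key v).sub (keyG v)).differentiableAt)
      (fun v => by simpa [Pi.sub_def] using ((key v).sub (keyG v)).deriv) u 0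
  have h0 : (∫ x, F 0 x ∂μ) = 0 := by
    have : F 0 = fun _ => (0:ℝ) := by
      funext x; rw [hF]; simp
    rw [this]; simp
  have := hsub t
  rw [h0] at this
  simp only [ne_eq, OfNat.ofNat_ne_zero, not_false_eq_true, zero_pow, zero_div, add_zero,
    Real.log_one] at this
  have goal : (∫ x, F t x ∂μ) = Real.log (1 + t^2/z^2) / 2 := by linarith
  exact goal

lemma intOn' {z : ℝ} (hz : 0 < z) (t : ℝ) :
    IntegrableOn (fun x => (1 - Real.cos (t*x)) * Real.exp (-z*x) / x) (Ioi (0:ℝ)) := by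
  have hmeas : AEStronglyMeasurable (fun x => (1 - Real.cos (t*x)) * Real.exp (-z*x) / x)
      ((volume : Measure ℝ).restrict (Ioi 0)) := by
    apply Measurable.aestronglyMeasurable
    exact ((measurable_const.sub ((measurable_const_mul t).cos)).mul
      ((measurable_id.const_mul (-z)).exp)).div measurable_id
  refine ((exp_neg_integrableOn_Ioi 0 hz).const_mul |t|).mono' hmeas ?_
  rw [ae_restrict_iff' measurableSet_Ioi]
  filter_upwards with x hx
  rw [Real.norm_eq_abs, abs_div, abs_mul, abs_of_pos (mem_Ioi.mp hx), abs_of_pos (Real.exp_pos _),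
    div_le_iff₀ (mem_Ioi.mp hx)]
  have h1 : |1 - Real.cos (t*x)| ≤ |t| * x := by
    rw [abs_of_nonneg (by nlinarith [Real.cos_le_one (t*x)])]
    calc 1 - Real.cos (t*x) ≤ |t*x| := one_sub_cos_le_abs _
      _ = |t| * x := by rw [abs_mul, abs_of_pos (mem_Ioi.mp hx)]
  calc |1 - Real.cos (t*x)| * Real.exp (-z*x) ≤ (|t| * x) * Real.exp (-z*x) :=
        mul_le_mul_of_nonneg_right h1 (Real.exp_pos _).le
    _ = |t| * Real.exp (-z*x) * x := by ring


lemma abs_eq_comp {z t : ℝ} : (fun x : ℝ => (1 - Real.cos (t*x)) * Real.exp (-z*|x|) / |x|)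
    = fun x => (fun y => (1 - Real.cos (t*y)) * Real.exp (-z*y) / y) |x| := by
  funext x
  simp only
  rcases abs_choice x with h | h
  · rw [h]
  · rw [h, show t * -x = -(t*x) by ring, Real.cos_neg]

lemma integrable_g {z : ℝ} (hz : 0 < z) (t : ℝ) :
    Integrable (fun x : ℝ => (1 - Real.cos (t*x)) * Real.exp (-z*|x|) / |x|) := by
  rw [abs_eq_comp]
  set f : ℝ → ℝ := fun y => (1 - Real.cos (t*y)) * Real.exp (-z*y) / y with hf
  have h1 : IntegrableOn (fun x => f |x|) (Ioi 0) := by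
    refine (intOn' hz t).congr_fun (fun x hx => ?_) measurableSet_Ioi
    rw [abs_of_pos hx]
  have h2 : IntegrableOn (fun x => f |x|) (Iic 0) := by
    rw [← Measure.map_neg_eq_self (volume : Measure ℝ)]
    have m : MeasurableEmbedding fun x : ℝ => -x := (Homeomorph.neg ℝ).measurableEmbedding
    rw [m.integrableOn_map_iff]
    simp_rw [Function.comp_def, abs_neg, neg_preimage, neg_Iic, neg_zero]
    exact Iff.mpr integrableOn_Ici_iff_integrableOn_Ioi h1
  have h3 := h2.union h1
  rwa [Iic_union_Ioi, integrableOn_univ] at h3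

lemma integral_g {z : ℝ} (hz : 0 < z) (t : ℝ) :
    ∫ x : ℝ, (1 - Real.cos (t*x)) * Real.exp (-z*|x|) / |x| = Real.log (1 + t^2/z^2) := by
  have h := integral_comp_abs (f := fun y => (1 - Real.cos (t*y)) * Real.exp (-z*y) / y)
  rw [abs_eq_comp, h, halfLog hz t]
  ring

theorem stmt4 (z : ℕ → ℝ) (hz : ∀ k, 0 < z k) (hsum : Summable fun k => 1 / z k ^ 2)
    (t : ℝ) :
    IntegrableOn
      (fun x => (1 - Real.cos (t * x)) * (∑' k : ℕ, Real.exp (-z k * |x|)) / |x|)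
      {(0 : ℝ)}ᶜ ∧
    ∏' k : ℕ, (1 + t ^ 2 / z k ^ 2)⁻¹ =
      Real.exp
        (-∫ x in {(0 : ℝ)}ᶜ,
            (1 - Real.cos (t * x)) * (∑' k : ℕ, Real.exp (-z k * |x|)) / |x|) := by
  set L : ℕ → ℝ := fun k => Real.log (1 + t^2 / z k^2) with hL
  set g : ℕ → ℝ → ℝ := fun k x => (1 - Real.cos (t*x)) * Real.exp (-z k * |x|) / |x| with hg
  set S : ℝ → ℝ := fun x => (1 - Real.cos (t * x)) * (∑' k : ℕ, Real.exp (-z k * |x|)) / |x|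
    with hS
  have hLnn : ∀ k, 0 ≤ L k := fun k => Real.log_nonneg (le_add_of_nonneg_right (by positivity))
  have hLsum : Summable L := by
    refine Summable.of_nonneg_of_le hLnn (fun k => ?_) (hsum.mul_left (t^2))
    have h1 : (0:ℝ) < 1 + t^2 / z k^2 := by positivity
    calc L k ≤ (1 + t^2 / z k^2) - 1 := Real.log_le_sub_one_of_pos h1
      _ = t^2 * (1 / z k^2) := by ring
  have hgInt : ∀ k, Integrable (g k) := fun k => integrable_g (hz k) t
  have hgval : ∀ k, ∫ x, g k x = L k := fun k => integral_g (hz k) t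
  have hg_nonneg : ∀ k x, 0 ≤ g k x := by
    intro k x
    apply div_nonneg _ (abs_nonneg x)
    exact mul_nonneg (by nlinarith [Real.cos_le_one (t*x)]) (Real.exp_pos _).le
  have hlint : ∀ k, (∫⁻ x, ‖g k x‖₊) = ENNReal.ofReal (L k) := by
    intro k
    rw [← hgval k, ofReal_integral_eq_lintegral_ofReal (hgInt k)
      (Eventually.of_forall (hg_nonneg k))]
    refine lintegral_congr fun x => ?_
    rw [← Real.enorm_eq_ofReal (hg_nonneg k x)]
    rfl
  have hfin : (∑' k, ∫⁻ x, ‖g k x‖₊) ≠ ⊤ := by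
    simp_rw [hlint]
    rw [← ENNReal.ofReal_tsum_of_nonneg hLnn hLsum]
    exact ENNReal.ofReal_ne_top
  have hpt : S = fun x => ∑' k, g k x := by
    funext x
    rw [hS, hg]
    simp only
    calc (1 - Real.cos (t * x)) * (∑' k : ℕ, Real.exp (-z k * |x|)) / |x|
        = (1 - Real.cos (t * x)) / |x| * ∑' k : ℕ, Real.exp (-z k * |x|) := by ring
      _ = ∑' k : ℕ, (1 - Real.cos (t * x)) / |x| * Real.exp (-z k * |x|) := tsum_mul_left.symm
      _ = ∑' k : ℕ, (1 - Real.cos (t*x)) * Real.exp (-z k * |x|) / |x| := by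
          exact tsum_congr fun k => by ring
  have hSmeas : AEStronglyMeasurable S volume := by
    have heq : S = fun x => (1 - Real.cos (t * x)) *
        ((∑' k : ℕ, ENNReal.ofReal (Real.exp (-z k * |x|))).toReal) / |x| := by
      funext x
      rw [hS]
      simp only
      congr 2
      rw [ENNReal.tsum_toReal_eq (fun k => ENNReal.ofReal_ne_top)]
      exact tsum_congr fun k => (ENNReal.toReal_ofReal (Real.exp_pos _).le).symm
    rw [heq]
    apply Measurable.aestronglyMeasurable
    apply Measurable.div _ measurable_abs
    apply Measurable.mul
    · exact measurable_const.sub ((measurable_const_mul t).cos)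
    · apply ENNReal.measurable_toReal.comp
      apply Measurable.ennreal_tsum
      intro k
      exact ((measurable_id.const_mul (-z k)).comp measurable_abs).exp.ennreal_ofReal
  have hSnn : ∀ x, 0 ≤ S x := by
    intro x
    rw [hpt]
    exact tsum_nonneg (fun k => hg_nonneg k x)
  have hSint : Integrable S := by
    refine ⟨hSmeas, ?_⟩
    rw [hasFiniteIntegral_iff_norm]
    calc (∫⁻ x, ENNReal.ofReal ‖S x‖)
        ≤ ∫⁻ x, ∑' k, ENNReal.ofReal (g k x) := by
          refine lintegral_mono fun x => ?_
          rw [Real.norm_of_nonneg (hSnn x), hpt]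
          simp only
          by_cases hsx : Summable fun k => g k x
          · rw [ENNReal.ofReal_tsum_of_nonneg (hg_nonneg · x) hsx]
          · rw [tsum_eq_zero_of_not_summable hsx]
            simp
      _ = ∑' k, ∫⁻ x, ENNReal.ofReal (g k x) := lintegral_tsum fun k =>
            ((hgInt k).aestronglyMeasurable.aemeasurable.ennreal_ofReal)
      _ < ⊤ := by
          have : ∀ k, (∫⁻ x, ENNReal.ofReal (g k x)) = ∫⁻ x, ‖g k x‖₊ := by
            intro k
            exact lintegral_congr fun x => (Real.enorm_eq_ofReal (hg_nonneg k x)).symm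
          simp_rw [this]
          exact lt_of_le_of_ne le_top hfin
  have hval : ∫ x, S x = ∑' k, L k := by
    rw [hpt, integral_tsum (fun k => (hgInt k).aestronglyMeasurable) hfin]
    exact tsum_congr hgval
  constructor
  · rw [IntegrableOn, restrict_compl_singleton]
    exact hSint
  · rw [show (∫ x in {(0:ℝ)}ᶜ, (1 - Real.cos (t * x)) * (∑' k : ℕ, Real.exp (-z k * |x|)) / |x|)
      = ∫ x, S x by rw [restrict_compl_singleton]]
    rw [hval]
    have hprod : HasProd (fun k => (1 + t ^ 2 / z k ^ 2)⁻¹) (Real.exp (-∑' k, L k)) := by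
      have h := (hLsum.hasSum.neg).rexp
      refine HasProd.congr_fun h fun k => ?_
      rw [Function.comp_apply, Real.exp_neg, hL]
      simp only
      rw [Real.exp_log (by positivity)]
    exact hprod.tprod_eq
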